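/- At P₄ = (1,0,0) the Jacobian of the event-horizon system has eigenvalues 1-3β+3γ, 3γ-3β-1, and -(3/2)(β-γ-1). In particular, if β = γ then the eigenvalues are 1, -1, 3/2, so P₄ is a saddle. -/

import Mathlib

/-- Vector field of the Model 2 autonomous system with future event horizon IR cutoff. -/
noncomputable def Gev (α β γ b : ℝ) (p : ℝ × ℝ × ℝ) : ℝ × ℝ × ℝ :=
  let x := p.1; let y := p.2.1; let z := p.2.2
  (x * ((1 + 3 * β - 3 * γ + 3 * α * z / (1 - z)) * (1 - x)
        - 2 * y * (1 + Real.sqrt y / b)),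
   y * (2 * (1 - y) * (1 + Real.sqrt y / b)
        - x * (1 + 3 * β - 3 * γ + 3 * α * z / (1 - z))),
   z * (1 - z) / 2 *
     (4 - 2 * y * (1 + Real.sqrt y / b)
        - x * (1 + 3 * β - 3 * γ + 3 * α * z / (1 - z))))

/-- Jacobian matrix of `Gev` at a point, via Fréchet derivatives. -/
noncomputable def Jev (α β γ b : ℝ) (p : ℝ × ℝ × ℝ) : Matrix (Fin 3) (Fin 3) ℝ :=
  let e : Fin 3 → ℝ × ℝ × ℝ := ![(1, 0, 0), (0, 1, 0), (0, 0, 1)]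
  Matrix.of fun i j =>
    fderiv ℝ (fun q => ![(Gev α β γ b q).1, (Gev α β γ b q).2.1,
      (Gev α β γ b q).2.2] i) p (e j)

open Polynomial

lemma sqrtmul' : HasDerivAt (fun y : ℝ => Real.sqrt y * y) 0 0 := by
  rw [hasDerivAt_iff_tendsto_slope]
  have h : ∀ y : ℝ, slope (fun y : ℝ => Real.sqrt y * y) 0 y = Real.sqrt y := by
    intro y
    rcases eq_or_ne y 0 with h | h
    · simp [slope, h]
    · rw [slope_def_field]; simp only [Real.sqrt_zero, mul_zero, sub_zero]; field_simp
  simp only [funext h]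
  have := (Real.continuous_sqrt.tendsto 0).mono_left (nhdsWithin_le_nhds (s := {(0:ℝ)}ᶜ))
  simpa using this

lemma hKd (α β γ : ℝ) : HasDerivAt (fun z : ℝ => 1 + 3*β - 3*γ + 3*α*z/(1-z)) (3*α) 0 := by
  have h1 : HasDerivAt (fun z:ℝ => 3*α*z) (3*α) 0 := by
    simpa using (hasDerivAt_id (0:ℝ)).const_mul (3*α)
  have h2 : HasDerivAt (fun z:ℝ => 1 - z) (-1) 0 := by
    simpa using (hasDerivAt_id (0:ℝ)).const_sub 1
  have h3 := h1.div h2 (by norm_num)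
  have h4 := h3.const_add (1 + 3*β - 3*γ)
  exact h4.congr_deriv (by norm_num)

lemma hSd (b : ℝ) : HasDerivAt (fun y : ℝ => y * (1 + Real.sqrt y / b)) 1 0 := by
  have : (fun y : ℝ => y * (1 + Real.sqrt y / b)) = fun y => y + (Real.sqrt y * y) / b := by
    funext y; ring
  rw [this]
  exact ((hasDerivAt_id (0:ℝ)).add (sqrtmul'.div_const b)).congr_deriv (by norm_num)

lemma hUd (b : ℝ) : HasDerivAt (fun y : ℝ => y * (2 * (1-y) * (1 + Real.sqrt y / b))) 2 0 := by
  have : (fun y : ℝ => y * (2 * (1-y) * (1 + Real.sqrt y / b)))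
      = fun y => 2*y - 2*y^2 + 2*(Real.sqrt y * y)/b - 2*((Real.sqrt y * y)*y)/b := by
    funext y; ring
  rw [this]
  have h1 : HasDerivAt (fun y:ℝ => 2*y) 2 0 := by simpa using (hasDerivAt_id (0:ℝ)).const_mul 2
  have h2 : HasDerivAt (fun y:ℝ => 2*y^2) 0 0 := by
    simpa using ((hasDerivAt_pow 2 (0:ℝ))).const_mul 2
  have h3 : HasDerivAt (fun y:ℝ => 2*(Real.sqrt y * y)/b) 0 0 := by
    simpa using (sqrtmul'.const_mul 2).div_const b
  have h4 : HasDerivAt (fun y:ℝ => 2*((Real.sqrt y * y)*y)/b) 0 0 := by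
    simpa using ((sqrtmul'.mul (hasDerivAt_id (0:ℝ))).const_mul 2).div_const b
  exact (((h1.sub h2).add h3).sub h4).congr_deriv (by norm_num)

lemma Jev_eq (α β γ b : ℝ) :
    Jev α β γ b (1,0,0) =
      !![3*γ-3*β-1, -2, 0; 0, 1-3*β+3*γ, 0; 0, 0, 3/2*(1-β+γ)] := by
  set p0 : ℝ × ℝ × ℝ := (1,0,0) with hp0
  have hx : HasFDerivAt (fun q : ℝ×ℝ×ℝ => q.1) (ContinuousLinearMap.fst ℝ ℝ (ℝ×ℝ)) p0 :=
    hasFDerivAt_fst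
  have hyz : HasFDerivAt (fun q : ℝ×ℝ×ℝ => q.2) (ContinuousLinearMap.snd ℝ ℝ (ℝ×ℝ)) p0 :=
    hasFDerivAt_snd
  have hy : HasFDerivAt (fun q : ℝ×ℝ×ℝ => q.2.1)
      ((ContinuousLinearMap.fst ℝ ℝ ℝ).comp (ContinuousLinearMap.snd ℝ ℝ (ℝ×ℝ))) p0 :=
    (hasFDerivAt_fst (𝕜 := ℝ) (p := p0.2)).comp p0 hyz
  have hz : HasFDerivAt (fun q : ℝ×ℝ×ℝ => q.2.2)
      ((ContinuousLinearMap.snd ℝ ℝ ℝ).comp (ContinuousLinearMap.snd ℝ ℝ (ℝ×ℝ))) p0 :=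
    (hasFDerivAt_snd (𝕜 := ℝ) (p := p0.2)).comp p0 hyz
  have hKq := (hKd α β γ).comp_hasFDerivAt p0 hz
  have hSq := (hSd b).comp_hasFDerivAt p0 hy
  have hUq := (hUd b).comp_hasFDerivAt p0 hy
  simp only [Function.comp_def] at hKq hSq hUq
  -- component 1
  have hF1 := hx.mul ((hKq.mul ((hasFDerivAt_const (1:ℝ) p0).sub hx)).sub (hSq.const_mul 2))
  have heq1 : (fun q : ℝ×ℝ×ℝ => (Gev α β γ b q).1)
      = fun q : ℝ×ℝ×ℝ => q.1 * ((1 + 3*β - 3*γ + 3*α*q.2.2/(1-q.2.2)) * (1 - q.1)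
          - 2 * (q.2.1 * (1 + Real.sqrt q.2.1 / b))) := by
    funext q; simp only [Gev]; ring
  -- component 2
  have hF2 := hUq.sub ((hy.mul hx).mul hKq)
  have heq2 : (fun q : ℝ×ℝ×ℝ => (Gev α β γ b q).2.1)
      = fun q : ℝ×ℝ×ℝ => q.2.1 * (2 * (1 - q.2.1) * (1 + Real.sqrt q.2.1 / b))
          - (q.2.1 * q.1) * (1 + 3*β - 3*γ + 3*α*q.2.2/(1-q.2.2)) := by
    funext q; simp only [Gev]; ring
  -- component 3
  have hF3 := ((hz.mul ((hasFDerivAt_const (1:ℝ) p0).sub hz)).const_mul (1/2:ℝ)).mul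
      (((hasFDerivAt_const (4:ℝ) p0).sub (hSq.const_mul 2)).sub (hx.mul hKq))
  have heq3 : (fun q : ℝ×ℝ×ℝ => (Gev α β γ b q).2.2)
      = fun q : ℝ×ℝ×ℝ => 1/2 * (q.2.2 * (1 - q.2.2)) *
          (4 - 2 * (q.2.1 * (1 + Real.sqrt q.2.1 / b))
            - q.1 * (1 + 3*β - 3*γ + 3*α*q.2.2/(1-q.2.2))) := by
    funext q; simp only [Gev]; ring
  have e1 : ∀ v : ℝ × ℝ × ℝ, fderiv ℝ (fun q => (Gev α β γ b q).1) p0 v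
      = (3*γ-3*β-1) * v.1 + (-2) * v.2.1 + 0 * v.2.2 := by
    intro v
    rw [heq1, HasFDerivAt.fderiv (f := fun q : ℝ×ℝ×ℝ => q.1 * ((1 + 3*β - 3*γ + 3*α*q.2.2/(1-q.2.2)) * (1 - q.1)
          - 2 * (q.2.1 * (1 + Real.sqrt q.2.1 / b)))) hF1]
    simp [hp0]
    ring
  have e2 : ∀ v : ℝ × ℝ × ℝ, fderiv ℝ (fun q => (Gev α β γ b q).2.1) p0 v
      = 0 * v.1 + (1-3*β+3*γ) * v.2.1 + 0 * v.2.2 := by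
    intro v
    rw [heq2, HasFDerivAt.fderiv (f := fun q : ℝ×ℝ×ℝ => q.2.1 * (2 * (1 - q.2.1) * (1 + Real.sqrt q.2.1 / b))
          - (q.2.1 * q.1) * (1 + 3*β - 3*γ + 3*α*q.2.2/(1-q.2.2))) hF2]
    simp [hp0]
    ring
  have e3 : ∀ v : ℝ × ℝ × ℝ, fderiv ℝ (fun q => (Gev α β γ b q).2.2) p0 v
      = 0 * v.1 + 0 * v.2.1 + (3/2*(1-β+γ)) * v.2.2 := by
    intro v
    rw [heq3, HasFDerivAt.fderiv (f := fun q : ℝ×ℝ×ℝ => 1/2 * (q.2.2 * (1 - q.2.2)) *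
          (4 - 2 * (q.2.1 * (1 + Real.sqrt q.2.1 / b))
            - q.1 * (1 + 3*β - 3*γ + 3*α*q.2.2/(1-q.2.2)))) hF3]
    simp [hp0]
    ring
  ext i j
  fin_cases i <;> fin_cases j <;>
    simp only [Jev, Matrix.of_apply, Fin.zero_eta, Fin.mk_one, Fin.isValue,
      Matrix.cons_val_zero, Matrix.cons_val_one, Matrix.head_cons, Matrix.cons_val_two,
      Matrix.tail_cons, Matrix.head_fin_const, Matrix.cons_val', Matrix.empty_val',
      Matrix.cons_val_fin_one]
  · exact (e1 (1,0,0)).trans (by norm_num)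
  · exact (e1 (0,1,0)).trans (by norm_num)
  · exact (e1 (0,0,1)).trans (by norm_num)
  · exact (e2 (1,0,0)).trans (by norm_num)
  · exact (e2 (0,1,0)).trans (by norm_num)
  · exact (e2 (0,0,1)).trans (by norm_num)
  · exact (e3 (1,0,0)).trans (by norm_num)
  · exact (e3 (0,1,0)).trans (by norm_num)
  · exact (e3 (0,0,1)).trans (by norm_num)
theorem P4_jacobian_eigenvalues (α β γ b : ℝ) (hb : 0 < b) :
    (Matrix.charpoly (Jev α β γ b (1, 0, 0))).roots =
      {1 - 3 * β + 3 * γ, 3 * γ - 3 * β - 1, -(3 / 2) * (β - γ - 1)} ∧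
    (β = γ →
      (Matrix.charpoly (Jev α β γ b (1, 0, 0))).roots =
        {1, -1, 3 / 2}) := by
  have hcp : (Matrix.charpoly (Jev α β γ b (1, 0, 0)))
      = (X - C (1 - 3*β + 3*γ)) * (X - C (3*γ - 3*β - 1)) * (X - C (-(3/2)*(β - γ - 1))) := by
    rw [Jev_eq, Matrix.charpoly, Matrix.det_fin_three]
    simp [Matrix.charmatrix_apply, Matrix.one_apply]
    ring
  have hroots : (Matrix.charpoly (Jev α β γ b (1, 0, 0))).roots
      = {1 - 3 * β + 3 * γ, 3 * γ - 3 * β - 1, -(3 / 2) * (β - γ - 1)} := by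
    rw [hcp, Polynomial.roots_mul (mul_ne_zero (mul_ne_zero (X_sub_C_ne_zero _)
      (X_sub_C_ne_zero _)) (X_sub_C_ne_zero _)),
      Polynomial.roots_mul (mul_ne_zero (X_sub_C_ne_zero _) (X_sub_C_ne_zero _)),
      roots_X_sub_C, roots_X_sub_C, roots_X_sub_C]
    rfl
  refine ⟨hroots, fun h => ?_⟩
  rw [hroots, h]
  norm_num
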